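/- Let s = w[i+1..n] (where n = |w|) be a suffix-palindrome of w whose occurrence is leading in w, suppose s is cubic, and let s = (uv)^k u be its canonical decomposition (so k ≥ 3). Then the occurrence w[i+1..n−|uv|], whose content is (uv)^(k−1) u, is a subpalindrome of w that is leading in w. -/

import Mathlib

/-- `w = z^k`: concatenation of `k` copies of `z`. -/
def listPow {α : Type*} (z : List α) (k : ℕ) : List α := (List.replicate k z).flatten

/-- A positive integer `p` is a period of `w` if `w[i] = w[i+p]` whenever both positions
are inside `w` (0-indexed). -/
def HasPeriod {α : Type*} (w : List α) (p : ℕ) : Prop :=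
  0 < p ∧ ∀ i : ℕ, i + p < w.length → w[i]? = w[i + p]?

/-- The substring `w[i..j]` (1-indexed, `w[i..i-1] = ε`). -/
def substr {α : Type*} (w : List α) (i j : ℕ) : List α := (w.drop (i - 1)).take (j + 1 - i)

/-- `(i, j)` is an occurrence of a subpalindrome of `w`. -/
def SubPalAt {α : Type*} (w : List α) (i j : ℕ) : Prop :=
  1 ≤ i ∧ i ≤ j + 1 ∧ j ≤ w.length ∧ (substr w i j).reverse = substr w i j

/-- The occurrence `w[i..j]` is leading in `w`: every period `p` of every strictly longer
subpalindrome `w[i..j]` with the same right end satisfies `2p > j - i + 1`. -/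
def LeadingAt {α : Type*} (w : List α) (i j : ℕ) : Prop :=
  ∀ i2 p : ℕ, 1 ≤ i2 → i2 < i → (substr w i2 j).reverse = substr w i2 j →
    HasPeriod (substr w i2 j) p → 2 * p > j + 1 - i

section Aux

variable {α : Type*}

lemma getElem?_take' {l : List α} {n m : ℕ} (h : m < n) : (l.take n)[m]? = l[m]? := by
  simp [List.getElem?_take, h]

lemma listPow_succ (z : List α) (k : ℕ) : listPow z (k+1) = z ++ listPow z k := by
  simp [listPow, List.replicate_succ]

lemma listPow_succ' (z : List α) (k : ℕ) : listPow z (k+1) = listPow z k ++ z := by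
  simp [listPow, List.replicate_succ']

lemma listPow_length (z : List α) (k : ℕ) : (listPow z k).length = k * z.length := by
  simp [listPow]

lemma listPow_reverse (z : List α) (k : ℕ) : (listPow z k).reverse = listPow z.reverse k := by
  induction k with
  | zero => rfl
  | succ k ih => rw [listPow_succ, listPow_succ', List.reverse_append, ih]

lemma pow_shift (u v : List α) (m : ℕ) :
    u ++ listPow (v ++ u) m = listPow (u ++ v) m ++ u := by
  induction m with
  | zero => simp [listPow]
  | succ m ih =>
      simp only [listPow_succ, List.append_assoc] at *
      rw [ih]

lemma pow_pal {u v : List α} (hu : u.reverse = u) (hv : v.reverse = v) (m : ℕ) :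
    (listPow (u ++ v) m ++ u).reverse = listPow (u ++ v) m ++ u := by
  rw [List.reverse_append, listPow_reverse, List.reverse_append, hu, hv, pow_shift]

lemma hasPeriod_drop {X : List α} {p : ℕ} (h : HasPeriod X p) (d : ℕ) :
    HasPeriod (X.drop d) p := by
  refine ⟨h.1, fun j hj => ?_⟩
  rw [List.getElem?_drop, List.getElem?_drop]
  have hj' : j + p < X.length - d := by simpa using hj
  have := h.2 (d + j) (by omega)
  rwa [show d + j + p = d + (j + p) by omega] at this

lemma hasPeriod_take {X : List α} {p : ℕ} (h : HasPeriod X p) (n : ℕ) :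
    HasPeriod (X.take n) p := by
  refine ⟨h.1, fun j hj => ?_⟩
  have hj' : j + p < min n X.length := by simpa using hj
  rw [getElem?_take' (by omega), getElem?_take' (by omega)]
  exact h.2 j (by omega)

lemma period_of_drop_eq_take {X : List α} {p : ℕ} (hp : 0 < p)
    (h : X.drop p = X.take (X.length - p)) : HasPeriod X p := by
  refine ⟨hp, fun j hj => ?_⟩
  have := congrArg (fun l => l[j]?) h
  simp only [List.getElem?_drop] at this
  rw [getElem?_take' (by omega)] at this
  rw [← this, show p + j = j + p by omega]

lemma drop_eq_take_of_period {X : List α} {p : ℕ} (h : HasPeriod X p) :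
    X.drop p = X.take (X.length - p) := by
  apply List.ext_getElem?
  intro j
  by_cases hj : j < X.length - p
  · rw [List.getElem?_drop, getElem?_take' hj]
    rw [show p + j = j + p by omega]
    exact (h.2 j (by omega)).symm
  · rw [List.getElem?_drop, List.getElem?_eq_none (by omega),
      List.getElem?_eq_none (by rw [List.length_take]; omega)]

lemma pal_suffix_period {t : List α} {d : ℕ} (hd : 0 < d) (ht : t.reverse = t)
    (hs : (t.drop d).reverse = t.drop d) : HasPeriod t d := by
  apply period_of_drop_eq_take hd
  conv_lhs => rw [← hs]
  rw [List.reverse_drop, ht]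

lemma period_sub {X : List α} {a b : ℕ} (ha : HasPeriod X a) (hb : HasPeriod X b)
    (hba : b < a) (hl : a + b ≤ X.length) : HasPeriod X (a - b) := by
  refine ⟨by omega, fun j hj => ?_⟩
  by_cases hc : j + a < X.length
  · have h1 := ha.2 j hc
    have h2 := hb.2 (j + (a - b)) (by omega)
    rw [show j + (a - b) + b = j + a by omega] at h2
    rw [h1, ← h2]
  · have hib : b ≤ j := by omega
    have h1 := hb.2 (j - b) (by omega)
    rw [Nat.sub_add_cancel hib] at h1
    have h2 := ha.2 (j - b) (by omega)
    rw [show j - b + a = j + (a - b) by omega] at h2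
    rw [← h1, h2]

lemma gcd_sub' (a b : ℕ) (h : b ≤ a) : Nat.gcd (a - b) b = Nat.gcd a b := by
  conv_rhs => rw [← Nat.sub_add_cancel h]
  rw [Nat.gcd_comm (a - b + b) b, Nat.gcd_add_self_right, Nat.gcd_comm]

lemma finewilf (p q : ℕ) (X : List α) (hp : HasPeriod X p) (hq : HasPeriod X q)
    (hl : p + q ≤ X.length) : HasPeriod X (Nat.gcd p q) := by
  rcases lt_trichotomy p q with h | h | h
  · have hp0 : 0 < p := hp.1
    have hs := period_sub hq hp h (by omega)
    have hrec := finewilf p (q - p) X hp hs (by omega)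
    rwa [Nat.gcd_comm p (q - p), gcd_sub' q p (by omega), Nat.gcd_comm q p] at hrec
  · subst h
    rwa [Nat.gcd_self]
  · have hq0 : 0 < q := hq.1
    have hs := period_sub hp hq h (by omega)
    have hrec := finewilf (p - q) q X hs hq (by omega)
    rwa [gcd_sub' p q (by omega)] at hrec
termination_by p + q
decreasing_by all_goals omega

lemma period_lift {X : List α} {p g : ℕ} (hX : HasPeriod X p)
    (hpre : HasPeriod (X.take (X.length - p)) g) (hdvd : g ∣ p)
    (hlen : 3 * p ≤ X.length) : HasPeriod X g := by
  have hg : 0 < g := hpre.1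
  have hgp : g ≤ p := Nat.le_of_dvd hX.1 hdvd
  have pre : ∀ x, x + g < X.length - p → X[x]? = X[x + g]? := by
    intro x hx
    have := hpre.2 x (by rw [List.length_take]; omega)
    rwa [getElem?_take' (by omega), getElem?_take' (by omega)] at this
  refine ⟨hg, fun j hj => ?_⟩
  by_cases hc : j + g < X.length - p
  · exact pre j hc
  · have hjp : p ≤ j := by omega
    have h1 := hX.2 (j - p) (by omega)
    rw [Nat.sub_add_cancel hjp] at h1
    have h2 := hX.2 (j + g - p) (by omega)
    rw [show j + g - p + p = j + g by omega] at h2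
    have h3 := pre (j - p) (by omega)
    rw [show j - p + g = j + g - p by omega] at h3
    rw [← h1, h3, h2]

lemma period_iter {X : List α} {G : ℕ} (h : HasPeriod X G) :
    ∀ (m j : ℕ), j + m * G < X.length → X[j]? = X[j + m * G]? := by
  intro m
  induction m with
  | zero => simp
  | succ m ih =>
      intro j hj
      have hmul : (m + 1) * G = m * G + G := by ring
      rw [hmul] at hj ⊢
      rw [← Nat.add_assoc]
      exact (ih j (by omega)).trans (h.2 (j + m * G) (by omega))

lemma W_period {W : List α} {p G d : ℕ} (hpg : p ≤ G) (hp : 0 < p)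
    (ht : HasPeriod (W.take (W.length - p)) G)
    (hs : HasPeriod (W.drop d) p)
    (hlen : 2 * G + p + d ≤ W.length) : HasPeriod W p := by
  have hG : 0 < G := ht.1
  have titer : ∀ m x, x + m * G < W.length - p → W[x]? = W[x + m * G]? := by
    intro m x hx
    have h1 := period_iter ht m x (by rw [List.length_take]; omega)
    rwa [getElem?_take' (by omega), getElem?_take' (by omega)] at h1
  have sper : ∀ y, d ≤ y → y + p < W.length → W[y]? = W[y + p]? := by
    intro y hy1 hy2
    have h1 := hs.2 (y - d) (by rw [List.length_drop]; omega)
    rw [List.getElem?_drop, List.getElem?_drop,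
      show d + (y - d) = y by omega, show d + (y - d + p) = y + p by omega] at h1
    exact h1
  refine ⟨hp, fun j hj => ?_⟩
  by_cases hjd : d ≤ j
  · exact sper j hjd hj
  · obtain ⟨m, hm1, hm2⟩ : ∃ m, d ≤ j + m * G ∧ j + m * G < d + G := by
      refine ⟨(d - j - 1) / G + 1, ?_, ?_⟩ <;>
      · have h0 := Nat.div_add_mod (d - j - 1) G
        have h1 := Nat.mod_lt (d - j - 1) hG
        have h2 : ((d - j - 1) / G + 1) * G = G * ((d - j - 1) / G) + G := by ring
        rw [h2]
        omega
    have e1 : W[j]? = W[j + m * G]? := titer m j (by omega)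
    have e2 : W[j + m * G]? = W[j + m * G + p]? := sper _ hm1 (by omega)
    have e3 : W[j + p]? = W[j + p + m * G]? := titer m (j + p) (by omega)
    rw [e1, e2, e3, show j + p + m * G = j + m * G + p by omega]

lemma period_pow_extend {z u : List α} (hz : z ≠ []) :
    ∀ (m : ℕ) (W : List α) (kk : ℕ), 1 ≤ kk → HasPeriod W z.length →
      W.drop (m * z.length) = listPow z kk ++ u → W = listPow z (m + kk) ++ u := by
  have hzl : 0 < z.length := List.length_pos_iff.mpr hz
  intro m
  induction m with
  | zero => intro W kk h1 h2 h3; simpa using h3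
  | succ m ih =>
      intro W kk h1 hW h3
      have hdrop : (W.drop z.length).drop (m * z.length) = listPow z kk ++ u := by
        rw [List.drop_drop, show z.length + m * z.length = (m + 1) * z.length by ring]
        exact h3
      have ih' := ih (W.drop z.length) kk h1 (hasPeriod_drop hW _) hdrop
      have hlen3 := congrArg List.length h3
      simp only [List.length_drop, List.length_append, listPow_length] at hlen3
      have hk1 : 1 * z.length ≤ kk * z.length := Nat.mul_le_mul_right _ h1
      have hm1z : 1 * z.length ≤ (m + 1) * z.length := Nat.mul_le_mul_right _ (by omega)
      have hWlen : (m + 1) * z.length + (kk * z.length + u.length) ≤ W.length := by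
        omega
      have htk : W.take z.length = z := by
        have hdt := drop_eq_take_of_period hW
        have h4 : W.take z.length = (W.drop z.length).take z.length := by
          rw [hdt, List.take_take, min_eq_left (by omega)]
        rw [h4, ih']
        obtain ⟨jj, hjj⟩ : ∃ jj, m + kk = jj + 1 := ⟨m + kk - 1, by omega⟩
        rw [hjj, listPow_succ, List.append_assoc]
        exact List.take_left ..
      conv_lhs => rw [← List.take_append_drop z.length W]
      rw [htk, ih', ← List.append_assoc, ← listPow_succ,
        show m + 1 + kk = (m + kk) + 1 by omega]

end Aux

/-- If `s = w[i+1..n]` (`n = |w|`) is a leading cubic suffix-palindrome of `w` with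
canonical decomposition `(uv)^k u` (`k ≥ 3`), then the occurrence `w[i+1..n-|uv|]`,
whose content is `(uv)^(k-1) u`, is a subpalindrome of `w` that is leading in `w`. -/
theorem stmt_14 {α : Type*} (w u v : List α) (i k : ℕ)
    (hsub : SubPalAt w (i + 1) w.length) (hlead : LeadingAt w (i + 1) w.length)
    (hu : u.reverse = u) (hv : v.reverse = v) (hvne : v ≠ [])
    (hper : HasPeriod (substr w (i + 1) w.length) (u.length + v.length))
    (hmin : ∀ q, HasPeriod (substr w (i + 1) w.length) q → u.length + v.length ≤ q)
    (hcubic : 3 * (u.length + v.length) ≤ (substr w (i + 1) w.length).length)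
    (hk : 3 ≤ k)
    (hdec : substr w (i + 1) w.length = listPow (u ++ v) k ++ u) :
    substr w (i + 1) (w.length - (u.length + v.length)) = listPow (u ++ v) (k - 1) ++ u ∧
    SubPalAt w (i + 1) (w.length - (u.length + v.length)) ∧
    LeadingAt w (i + 1) (w.length - (u.length + v.length)) := by
  set n := w.length with hn
  set p := u.length + v.length with hpdef
  have hvl : 0 < v.length := List.length_pos_iff.mpr hvne
  have hp : 0 < p := by omega
  have hin : i ≤ n := by have := hsub.2.1; omega
  have hzlen : (u ++ v).length = p := by simp [hpdef]
  have hs_eq : substr w (i + 1) n = w.drop i := by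
    show (w.drop (i + 1 - 1)).take (n + 1 - (i + 1)) = w.drop i
    rw [show i + 1 - 1 = i by omega, show n + 1 - (i + 1) = n - i by omega]
    exact List.take_of_length_le (by simp; omega)
  have hslen : (substr w (i + 1) n).length = n - i := by rw [hs_eq]; simp; omega
  set A := (k - 1) * p with hA
  have hkp : k * p = A + p := by
    rw [hA]
    cases k with
    | zero => omega
    | succ k => simp [Nat.succ_sub_one, Nat.succ_mul]
  have hA2 : 2 * p ≤ A := by
    rw [hA]
    calc 2 * p ≤ (k - 1) * p := Nat.mul_le_mul_right _ (by omega)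
      _ = (k - 1) * p := rfl
  have hlen1 : n - i = A + p + u.length := by
    have hh := congrArg List.length hdec
    rw [hslen] at hh
    simp only [List.length_append, listPow_length, hzlen] at hh
    rw [hh, hkp]
  have hni : i + 3 * p ≤ n := by rw [hslen] at hcubic; omega
  have hwd : w.drop i = listPow (u ++ v) k ++ u := by rw [← hs_eq]; exact hdec
  obtain ⟨K, hK⟩ : ∃ K, k = K + 1 := ⟨k - 1, by omega⟩
  have hK1 : k - 1 = K := by omega
  have part1 : substr w (i + 1) (n - p) = listPow (u ++ v) (k - 1) ++ u := by
    show (w.drop (i + 1 - 1)).take (n - p + 1 - (i + 1)) = _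
    rw [show i + 1 - 1 = i by omega, show n - p + 1 - (i + 1) = A + u.length by omega]
    rw [hwd, hK, Nat.add_sub_cancel, listPow_succ', List.append_assoc]
    rw [show A = (listPow (u ++ v) K).length by rw [hA, hK1, listPow_length, hzlen]]
    rw [List.take_append]
    congr 1
    · exact List.take_of_length_le (by omega)
    · rw [Nat.add_sub_cancel_left, List.append_assoc]
      exact List.take_left ..
  have palnew : (listPow (u ++ v) (k - 1) ++ u).reverse = listPow (u ++ v) (k - 1) ++ u :=
    pow_pal hu hv _
  refine ⟨part1, ⟨by omega, by omega, by omega, by rw [part1]; exact palnew⟩, ?_⟩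
  -- Leading
  intro i2 q h1 h2 hpal hq
  by_contra hcon
  push_neg at hcon
  have hcon' : 2 * q ≤ n - p - i := by omega
  have hq0 : 0 < q := hq.1
  set a := i2 - 1 with ha
  have hai : a < i := by omega
  set d := i - a with hd
  have hd0 : 0 < d := by omega
  set W := w.drop a with hW
  have hWlen : W.length = n - a := by simp [hW]; omega
  have hWsub : substr w i2 n = W := by
    show (w.drop (i2 - 1)).take (n + 1 - i2) = W
    rw [← ha, show n + 1 - i2 = n - a by omega, hW]
    exact List.take_of_length_le (by simp; omega)
  have htsub : substr w i2 (n - p) = W.take (W.length - p) := by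
    show (w.drop (i2 - 1)).take (n - p + 1 - i2) = _
    rw [← ha, hWlen, show n - p + 1 - i2 = n - a - p by omega]
  have hWdropd : W.drop d = w.drop i := by
    rw [hW, List.drop_drop, show a + d = i by omega]
  rw [htsub] at hpal hq
  have hTlen : (W.take (W.length - p)).length = n - p - a := by
    rw [List.length_take, hWlen]; omega
  have htdropd : (W.take (W.length - p)).drop d = substr w (i + 1) (n - p) := by
    rw [List.drop_take, hWdropd]
    show (w.drop i).take (W.length - p - d) = (w.drop (i + 1 - 1)).take (n - p + 1 - (i + 1))
    rw [hWlen, show i + 1 - 1 = i by omega,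
      show n - a - p - d = n - p + 1 - (i + 1) by omega]
  have hs'pal : (substr w (i + 1) (n - p)).reverse = substr w (i + 1) (n - p) := by
    rw [part1]; exact palnew
  have htperd : HasPeriod (W.take (W.length - p)) d := by
    apply pal_suffix_period hd0 hpal
    rw [htdropd]; exact hs'pal
  set G := Nat.gcd q d with hG
  have hGq : G ≤ q := Nat.le_of_dvd hq0 (Nat.gcd_dvd_left ..)
  have hG0 : 0 < G := Nat.gcd_pos_of_pos_left _ hq0
  have htG : HasPeriod (W.take (W.length - p)) G :=
    finewilf q d _ hq htperd (by rw [hTlen]; omega)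
  have hs'take : substr w (i + 1) (n - p) = (substr w (i + 1) n).take (n - p - i) := by
    rw [hs_eq]
    show (w.drop (i + 1 - 1)).take (n - p + 1 - (i + 1)) = _
    rw [show i + 1 - 1 = i by omega, show n - p + 1 - (i + 1) = n - p - i by omega]
  have hs'p : HasPeriod (substr w (i + 1) (n - p)) p := by
    rw [hs'take]; exact hasPeriod_take hper _
  have hs'G : HasPeriod (substr w (i + 1) (n - p)) G := by
    rw [← htdropd]; exact hasPeriod_drop htG _
  have hs'len : (substr w (i + 1) (n - p)).length = n - p - i := by
    rw [hs'take, List.length_take, hslen]; omega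
  set g2 := Nat.gcd p G with hg2
  have hs'g2 : HasPeriod (substr w (i + 1) (n - p)) g2 :=
    finewilf p G _ hs'p hs'G (by rw [hs'len]; omega)
  have hsg2 : HasPeriod (substr w (i + 1) n) g2 := by
    apply period_lift hper _ (Nat.gcd_dvd_left ..) (by rw [hslen]; omega)
    rw [hslen, show n - i - p = n - p - i by omega, ← hs'take]
    exact hs'g2
  have hg2p : g2 = p := by
    have ha1 := hmin g2 hsg2
    have ha2 : g2 ≤ p := Nat.le_of_dvd hp (Nat.gcd_dvd_left ..)
    omega
  have hpG : p ∣ G := by rw [← hg2p]; exact Nat.gcd_dvd_right ..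
  have hpGle : p ≤ G := Nat.le_of_dvd hG0 hpG
  have hpd : p ∣ d := dvd_trans hpG (Nat.gcd_dvd_right ..)
  have hWp : HasPeriod W p := by
    apply W_period hpGle hp htG _ (show 2 * G + p + d ≤ W.length by rw [hWlen]; omega)
    rw [hWdropd, ← hs_eq]
    exact hper
  obtain ⟨m, hm⟩ := hpd
  have hWpow : W = listPow (u ++ v) (m + k) ++ u := by
    apply period_pow_extend (by simp [hvne]) m W k (by omega)
    · rwa [hzlen]
    · rw [hzlen, show m * p = d from by rw [hm, Nat.mul_comm], hWdropd, hwd]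
  have hfinal := hlead i2 p h1 h2 (by rw [hWsub, hWpow]; exact pow_pal hu hv _)
    (by rw [hWsub]; exact hWp)
  omega
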